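/- Let A be a Krull domain with group of divisorial fractional ideals Div(A) and essential valuations ν_p indexed by height-one primes p, let K be an abelian group and φ: K → Div(A) a group homomorphism. Define for each height-one prime p the map μ_p on nonzero homogeneous elements a·χ^w of the group algebra Q(A)[K] by μ_p(a χ^w) = ν_p(a) + ν_p(φ(w)). Then each μ_p is a discrete K-valuation on the K-simple ring Q(A)[K], and the intersection R = ∩_p S_{μ_p} of the associated valuation rings is a K-graded subring with homogeneous components R_w = {a ∈ Q(A) : a = 0 or div(a) + φ(w) ≥ 0}·χ^w; in particular R_0 = A. -/

import Mathlib

section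

variable {A : Type*} [CommRing A] [IsDomain A] {P : Type*}
  (ν : P → FractionRing A → ℤ) {K : Type*} [AddCommGroup K] (Φ : K →+ (P →₀ ℤ))

/-- The homogeneous element `a·χ^w` of the group algebra `Q(A)[K]`. -/
noncomputable def MAsingle (w : K) (a : FractionRing A) : AddMonoidAlgebra (FractionRing A) K :=
  AddMonoidAlgebra.ofCoeff (Finsupp.single w a)

/-- The `K`-valuation subring `S_{μ_p}` of `Q(A)[K]` determined by the discrete `K`-valuation
`μ_p(a·χ^w) = ν_p(a) + ν_p(φ(w))` (here `ν_p(φ(w))` is encoded as `Φ w p`, using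
`Div(A) ≅ ⊕_p ℤ`). -/
noncomputable def valSubring (p : P) : Subring (AddMonoidAlgebra (FractionRing A) K) :=
  Subring.closure {x : AddMonoidAlgebra (FractionRing A) K |
    ∃ (w : K) (a : FractionRing A), a ≠ 0 ∧ 0 ≤ ν p a + Φ w p ∧ x = MAsingle w a}

lemma MAsingle_eq (w : K) (a : FractionRing A) :
    MAsingle w a = AddMonoidAlgebra.single w a := rfl

lemma nu_one (hmul : ∀ (p : P) (a b : FractionRing A), a ≠ 0 → b ≠ 0 →
    ν p (a * b) = ν p a + ν p b) (p : P) : ν p (1 : FractionRing A) = 0 := by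
  have h := hmul p 1 1 one_ne_zero one_ne_zero
  rw [mul_one] at h; omega

lemma nu_neg (hmul : ∀ (p : P) (a b : FractionRing A), a ≠ 0 → b ≠ 0 →
    ν p (a * b) = ν p a + ν p b) (p : P) (a : FractionRing A) (ha : a ≠ 0) :
    ν p (-a) = ν p a := by
  have h1 : ν p (-1 : FractionRing A) = 0 := by
    have h := hmul p (-1) (-1) (by simp) (by simp)
    rw [neg_mul_neg, one_mul] at h
    have h0 := nu_one ν hmul p
    omega
  have h := hmul p (-1) a (by simp) ha
  rw [neg_one_mul] at h
  omega

lemma sum_val (hadd : ∀ (p : P) (a b : FractionRing A), a ≠ 0 → b ≠ 0 → a + b ≠ 0 →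
      min (ν p a) (ν p b) ≤ ν p (a + b)) (p : P) {ι : Type*} (s : Finset ι)
    (f : ι → FractionRing A) (n : ℤ) :
    (∀ i ∈ s, f i = 0 ∨ n ≤ ν p (f i)) →
      ((∑ i ∈ s, f i) = 0 ∨ n ≤ ν p (∑ i ∈ s, f i)) := by
  classical
  induction s using Finset.cons_induction with
  | empty => exact fun _ => Or.inl (by simp)
  | cons i s hi ih =>
    intro h
    rw [Finset.sum_cons]
    by_cases hs0 : (∑ j ∈ s, f j) = 0
    · rw [hs0, add_zero]
      exact h i (Finset.mem_cons_self i s)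
    · have hs : n ≤ ν p (∑ j ∈ s, f j) :=
        (ih (fun j hj => h j (Finset.mem_cons_of_mem hj))).resolve_left hs0
      by_cases hfi : f i = 0
      · rw [hfi, zero_add]; exact Or.inr hs
      · have hνi : n ≤ ν p (f i) := (h i (Finset.mem_cons_self i s)).resolve_left hfi
        by_cases hsum : f i + ∑ j ∈ s, f j = 0
        · exact Or.inl hsum
        · exact Or.inr (le_trans (le_min hνi hs) (hadd p _ _ hfi hs0 hsum))

/-- The subring of elements all of whose homogeneous components satisfy the
valuation inequality for `μ_p`. -/
noncomputable def Tring (p : P)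
    (hmul : ∀ (p : P) (a b : FractionRing A), a ≠ 0 → b ≠ 0 → ν p (a * b) = ν p a + ν p b)
    (hadd : ∀ (p : P) (a b : FractionRing A), a ≠ 0 → b ≠ 0 → a + b ≠ 0 →
      min (ν p a) (ν p b) ≤ ν p (a + b)) :
    Subring (AddMonoidAlgebra (FractionRing A) K) where
  carrier := {x | ∀ u : K, x.coeff u = 0 ∨ 0 ≤ ν p (x.coeff u) + Φ u p}
  zero_mem' := fun u => Or.inl rfl
  one_mem' := by
    classical
    intro u
    rw [AddMonoidAlgebra.one_def]
    by_cases h : (0 : K) = u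
    · subst h
      right
      rw [AddMonoidAlgebra.coeff_single, Finsupp.single_apply, if_pos rfl, nu_one ν hmul p, map_zero]
      simp
    · left
      rw [AddMonoidAlgebra.coeff_single, Finsupp.single_apply, if_neg h]
  add_mem' := by
    intro x y hx hy u
    rw [AddMonoidAlgebra.coeff_add, Finsupp.add_apply]
    by_cases hxu : x.coeff u = 0
    · rw [hxu, zero_add]; exact hy u
    · by_cases hyu : y.coeff u = 0
      · rw [hyu, add_zero]; exact hx u
      · by_cases hs : x.coeff u + y.coeff u = 0
        · exact Or.inl hs
        · right
          have h1 := (hx u).resolve_left hxu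
          have h2 := (hy u).resolve_left hyu
          have h3 := hadd p (x.coeff u) (y.coeff u) hxu hyu hs
          omega
  neg_mem' := by
    intro x hx u
    rw [AddMonoidAlgebra.coeff_neg, Finsupp.neg_apply]
    by_cases hxu : x.coeff u = 0
    · left; rw [hxu, neg_zero]
    · right
      rw [nu_neg ν hmul p (x.coeff u) hxu]
      have := (hx u).resolve_left hxu
      omega
  mul_mem' := by
    intro x y hx hy u
    classical
    rw [AddMonoidAlgebra.coeff_mul]
    simp only [Finsupp.sum]
    have key : (∑ w1 ∈ x.coeff.support, ∑ w2 ∈ y.coeff.support,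
          if w1 + w2 = u then x.coeff w1 * y.coeff w2 else 0) = 0 ∨
        -Φ u p ≤ ν p (∑ w1 ∈ x.coeff.support, ∑ w2 ∈ y.coeff.support,
          if w1 + w2 = u then x.coeff w1 * y.coeff w2 else 0) := by
      apply sum_val ν hadd p
      intro w1 hw1
      apply sum_val ν hadd p
      intro w2 hw2
      by_cases heq : w1 + w2 = u
      · rw [if_pos heq]
        right
        have hx1 : x.coeff w1 ≠ 0 := Finsupp.mem_support_iff.mp hw1
        have hy2 : y.coeff w2 ≠ 0 := Finsupp.mem_support_iff.mp hw2
        have h1 := (hx w1).resolve_left hx1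
        have h2 := (hy w2).resolve_left hy2
        rw [hmul p _ _ hx1 hy2, ← heq, map_add, Finsupp.add_apply]
        omega
      · rw [if_neg heq]; exact Or.inl rfl
    rcases key with h | h
    · exact Or.inl h
    · right; omega

lemma valSubring_le_Tring (p : P)
    (hmul : ∀ (p : P) (a b : FractionRing A), a ≠ 0 → b ≠ 0 → ν p (a * b) = ν p a + ν p b)
    (hadd : ∀ (p : P) (a b : FractionRing A), a ≠ 0 → b ≠ 0 → a + b ≠ 0 →
      min (ν p a) (ν p b) ≤ ν p (a + b)) :
    valSubring ν Φ p ≤ Tring ν Φ p hmul hadd := by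
  classical
  apply Subring.closure_le.mpr
  rintro x ⟨w, a, ha, hb, rfl⟩ u
  show Finsupp.single w a u = 0 ∨ 0 ≤ ν p (Finsupp.single w a u) + Φ u p
  by_cases h : w = u
  · subst h
    rw [Finsupp.single_apply, if_pos rfl]
    exact Or.inr hb
  · rw [Finsupp.single_apply, if_neg h]
    exact Or.inl rfl

/-- For a Krull domain `A` with essential valuations `ν_p` and a homomorphism
`φ : K → Div(A)`, the maps `μ_p(aχ^w) = ν_p(a) + ν_p(φ(w))` are discrete `K`-valuations on the
`K`-simple group algebra `Q(A)[K]`, and `R = ⋂_p S_{μ_p}` is a `K`-graded subring with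
components `R_w = {a : div(a) + φ(w) ≥ 0}·χ^w`; in particular `R_0 = A`. -/
theorem stmt_11
    (hmul : ∀ (p : P) (a b : FractionRing A), a ≠ 0 → b ≠ 0 → ν p (a * b) = ν p a + ν p b)
    (hadd : ∀ (p : P) (a b : FractionRing A), a ≠ 0 → b ≠ 0 → a + b ≠ 0 →
      min (ν p a) (ν p b) ≤ ν p (a + b))
    (hsurj : ∀ (p : P) (n : ℤ), ∃ a : FractionRing A, a ≠ 0 ∧ ν p a = n)
    (hfin : ∀ a : FractionRing A, a ≠ 0 → {p : P | ν p a ≠ 0}.Finite)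
    (hA : ∀ a : FractionRing A, a ≠ 0 →
      ((∀ p : P, 0 ≤ ν p a) ↔ a ∈ Set.range (algebraMap A (FractionRing A)))) :
    -- Q(A)[K] is K-simple
    (∀ (w : K) (a : FractionRing A), a ≠ 0 →
      ∃ y : AddMonoidAlgebra (FractionRing A) K, MAsingle w a * y = 1) ∧
    -- each μ_p is a discrete K-valuation: multiplicative ...
    (∀ (p : P) (w w' : K) (a a' : FractionRing A), a ≠ 0 → a' ≠ 0 →
      ν p (a * a') + Φ (w + w') p = (ν p a + Φ w p) + (ν p a' + Φ w' p)) ∧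
    -- ... satisfies the valuation inequality on each homogeneous component ...
    (∀ (p : P) (w : K) (a a' : FractionRing A), a ≠ 0 → a' ≠ 0 → a + a' ≠ 0 →
      min (ν p a + Φ w p) (ν p a' + Φ w p) ≤ ν p (a + a') + Φ w p) ∧
    -- ... and is surjective onto ℤ
    (∀ (p : P) (n : ℤ), ∃ (w : K) (a : FractionRing A), a ≠ 0 ∧ ν p a + Φ w p = n) ∧
    -- the homogeneous components of R = ⋂_p S_{μ_p}
    (∀ (w : K) (x : AddMonoidAlgebra (FractionRing A) K),
      (x ∈ (⨅ p : P, valSubring ν Φ p) ∧ ∀ u : K, u ≠ w → x.coeff u = 0) ↔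
        ∃ a : FractionRing A, (a = 0 ∨ ∀ p : P, 0 ≤ ν p a + Φ w p) ∧ x = MAsingle w a) ∧
    -- in particular R_0 = A
    (∀ x : AddMonoidAlgebra (FractionRing A) K,
      (x ∈ (⨅ p : P, valSubring ν Φ p) ∧ ∀ u : K, u ≠ 0 → x.coeff u = 0) ↔
        ∃ a : A, x = MAsingle 0 (algebraMap A (FractionRing A) a)) := by
  classical
  have h5 : ∀ (w : K) (x : AddMonoidAlgebra (FractionRing A) K),
      (x ∈ (⨅ p : P, valSubring ν Φ p) ∧ ∀ u : K, u ≠ w → x.coeff u = 0) ↔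
        ∃ a : FractionRing A, (a = 0 ∨ ∀ p : P, 0 ≤ ν p a + Φ w p) ∧ x = MAsingle w a := by
    intro w x
    constructor
    · rintro ⟨hmem, hsupp⟩
      have hx : x = MAsingle w (x.coeff w) := by
        ext u
        show x.coeff u = Finsupp.single w (x.coeff w) u
        rw [Finsupp.single_apply]
        by_cases h : w = u
        · subst h; rw [if_pos rfl]
        · rw [if_neg h, hsupp u (fun h' => h h'.symm)]
      refine ⟨x.coeff w, ?_, hx⟩
      by_cases hxw : x.coeff w = 0
      · exact Or.inl hxw
      · right
        intro p
        have hmemT : x ∈ Tring ν Φ p hmul hadd :=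
          valSubring_le_Tring ν Φ p hmul hadd (Subring.mem_iInf.mp hmem p)
        exact (hmemT w).resolve_left hxw
    · rintro ⟨a, ha, rfl⟩
      constructor
      · by_cases h0 : a = 0
        · subst h0
          have : MAsingle w (0 : FractionRing A) = 0 := AddMonoidAlgebra.single_zero w
          rw [this]
          exact Subring.zero_mem _
        · have ha' := ha.resolve_left h0
          exact Subring.mem_iInf.mpr fun p =>
            Subring.subset_closure ⟨w, a, h0, ha' p, rfl⟩
      · intro u hu
        show Finsupp.single w a u = 0
        rw [Finsupp.single_apply, if_neg (fun h' => hu h'.symm)]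
  refine ⟨?_, ?_, ?_, ?_, h5, ?_⟩
  · -- K-simplicity
    intro w a ha
    refine ⟨MAsingle (-w) a⁻¹, ?_⟩
    rw [MAsingle_eq, MAsingle_eq, AddMonoidAlgebra.single_mul_single, mul_inv_cancel₀ ha,
      add_neg_cancel]
    exact AddMonoidAlgebra.one_def.symm
  · intro p w w' a a' ha ha'
    rw [hmul p a a' ha ha', map_add, Finsupp.add_apply]
    ring
  · intro p w a a' ha ha' hs
    have := hadd p a a' ha ha' hs
    omega
  · intro p n
    obtain ⟨a, ha, hn⟩ := hsurj p n
    exact ⟨0, a, ha, by simp [hn]⟩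
  · -- R_0 = A
    intro x
    rw [h5 0 x]
    constructor
    · rintro ⟨a, ha, rfl⟩
      by_cases h0 : a = 0
      · exact ⟨0, by rw [h0, map_zero]⟩
      · have ha' : ∀ p : P, 0 ≤ ν p a := by
          intro p
          have := ha.resolve_left h0 p
          simpa using this
        obtain ⟨b, hb⟩ := (hA a h0).mp ha'
        exact ⟨b, by rw [hb]⟩
    · rintro ⟨b, rfl⟩
      refine ⟨algebraMap A (FractionRing A) b, ?_, rfl⟩
      by_cases h0 : algebraMap A (FractionRing A) b = 0
      · exact Or.inl h0
      · right
        intro p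
        have := (hA _ h0).mpr ⟨b, rfl⟩ p
        simpa using this

end
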